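/- Let $V, W$ be real inner product spaces of dimensions $2$ and $3$, and let $L : V \to W$ be linear of rank $2$ and $A : W \to W$ nonnegative self-adjoint. With $\hat{A} := 2 L^* A L$, the derivative of $t \mapsto \|(I+tA)L\|_1$ at $t = 0$ equals $\frac{1}{2\|L\|_1}\left(\mathrm{tr}(\hat{A}) + \sqrt{\det(L^* L)}\,\mathrm{tr}((L^* L)^{-1}\hat{A})\right)$. -/

import Mathlib

open Matrix

/-- The 1-Schatten norm `‖L‖₁ = tr √(Lᴴ L)`. -/
noncomputable def schatten1 {m n : ℕ} (L : Matrix (Fin n) (Fin m) ℝ) : ℝ :=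
  ((Matrix.posSemidef_conjTranspose_mul_self L).1.eigenvectorUnitary.1 *
    diagonal ((√·) ∘ (Matrix.posSemidef_conjTranspose_mul_self L).1.eigenvalues) *
    (star (Matrix.posSemidef_conjTranspose_mul_self L).1.eigenvectorUnitary : Matrix (Fin m) (Fin m) ℝ)).trace

lemma hent' (a b c : ℝ) : HasDerivAt (fun t : ℝ => a + t * b + t * t * c) b 0 := by
  have h := ((((hasDerivAt_id (0:ℝ)).mul_const b).const_add a).add
    (((hasDerivAt_id (0:ℝ)).mul (hasDerivAt_id 0)).mul_const c))
  refine HasDerivAt.congr_of_eventuallyEq (h.congr_deriv ?_)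
    (Filter.Eventually.of_forall fun t => ?_) <;> simp

lemma trace_sqrt_fin_two {M : Matrix (Fin 2) (Fin 2) ℝ} (hM : M.PosSemidef) :
    (hM.1.eigenvectorUnitary.1 * diagonal ((√·) ∘ hM.1.eigenvalues) *
      (star hM.1.eigenvectorUnitary : Matrix (Fin 2) (Fin 2) ℝ)).trace
      = Real.sqrt (M.trace + 2 * Real.sqrt M.det) := by
  have hU : (star hM.1.eigenvectorUnitary : Matrix (Fin 2) (Fin 2) ℝ) *
      hM.1.eigenvectorUnitary.1 = 1 := by
    exact Unitary.star_mul_self_of_mem hM.1.eigenvectorUnitary.2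
  rw [Matrix.trace_mul_comm, ← Matrix.mul_assoc, hU, Matrix.one_mul, Matrix.trace_diagonal,
    hM.1.trace_eq_sum_eigenvalues, hM.1.det_eq_prod_eigenvalues]
  simp only [Fin.sum_univ_two, Fin.prod_univ_two, Function.comp_apply]
  have h0 := hM.eigenvalues_nonneg 0
  have h1 := hM.eigenvalues_nonneg 1
  simp only [RCLike.ofReal_real_eq_id, id]
  rw [Real.sqrt_mul h0, eq_comm, Real.sqrt_eq_iff_mul_self_eq (by positivity) (by positivity)]
  nlinarith [Real.mul_self_sqrt h0, Real.mul_self_sqrt h1]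

/-- for `L` of rank 2 and `A` nonnegative self-adjoint, with
`Â := 2 Lᴴ A L`, the derivative of `t ↦ ‖(I + tA) L‖₁` at `t = 0` equals
`(tr Â + √det(Lᴴ L) · tr((Lᴴ L)⁻¹ Â)) / (2 ‖L‖₁)`. -/
theorem hasDerivAt_schatten1_formula
    (L : Matrix (Fin 3) (Fin 2) ℝ) (hL : L.rank = 2)
    (A : Matrix (Fin 3) (Fin 3) ℝ) (hA : A.PosSemidef) :
    HasDerivAt (fun t : ℝ => schatten1 ((1 + t • A) * L))
      ((1 / (2 * schatten1 L)) * (((2 : ℝ) • (Lᴴ * A * L)).trace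
        + Real.sqrt ((Lᴴ * L).det) * ((Lᴴ * L)⁻¹ * ((2 : ℝ) • (Lᴴ * A * L))).trace)) 0 := by
  have hC : (Lᴴ * L).PosSemidef := Matrix.posSemidef_conjTranspose_mul_self L
  set C := Lᴴ * L with hCdef
  set Ah := (2:ℝ) • (Lᴴ * A * L) with hAhdef
  set B := Lᴴ * (A * (A * L)) with hBdef
  -- expansion of the matrix as a polynomial in t
  have hMt : ∀ t : ℝ, ((1 + t • A) * L)ᴴ * ((1 + t • A) * L) = C + t • Ah + (t*t) • B := by
    intro t
    rw [hCdef, hAhdef, hBdef]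
    have hAs : Aᴴ = A := hA.1
    simp only [conjTranspose_mul, conjTranspose_add, conjTranspose_smul, conjTranspose_one,
      hAs, star_trivial, Matrix.mul_add, Matrix.add_mul, Matrix.smul_mul, Matrix.mul_smul,
      Matrix.mul_one, Matrix.one_mul, smul_smul, Matrix.mul_assoc]
    module
  -- positivity facts
  have hunit : IsUnit C := by
    have hrank : C.rank = 2 := by rw [hCdef, Matrix.rank_conjTranspose_mul_self]; exact hL
    have hsurj : Function.Surjective C.mulVec := by
      have : LinearMap.range C.mulVecLin = ⊤ := by
        apply Submodule.eq_top_of_finrank_eq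
        rw [Module.finrank_fintype_fun_eq_card]
        simpa [Matrix.rank] using hrank
      exact LinearMap.range_eq_top.mp this
    exact Matrix.mulVec_surjective_iff_isUnit.mp hsurj
  have hdet0 : 0 ≤ C.det := by
    rw [hC.1.det_eq_prod_eigenvalues]
    exact Finset.prod_nonneg fun i _ => by simpa using hC.eigenvalues_nonneg i
  have hdetne : C.det ≠ 0 := by
    intro h
    exact (hunit.ne_zero) (by simpa [h] using (Matrix.isUnit_iff_isUnit_det C).mp hunit)
  have hdetpos : 0 < C.det := lt_of_le_of_ne hdet0 (Ne.symm hdetne)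
  have hsd : 0 < Real.sqrt C.det := Real.sqrt_pos.mpr hdetpos
  have htrC : 0 ≤ C.trace := by
    exact hC.trace_nonneg
  have hS : 0 < C.trace + 2 * Real.sqrt C.det := by positivity
  have hL1 : schatten1 L = Real.sqrt (C.trace + 2 * Real.sqrt C.det) :=
    trace_sqrt_fin_two (Matrix.posSemidef_conjTranspose_mul_self L)
  have hL1pos : 0 < schatten1 L := by rw [hL1]; exact Real.sqrt_pos.mpr hS
  -- rewrite the function
  have hfun : (fun t : ℝ => schatten1 ((1 + t • A) * L)) =
      fun t : ℝ => Real.sqrt ((C.trace + t * Ah.trace + t * t * B.trace)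
        + 2 * Real.sqrt ((C 0 0 + t * Ah 0 0 + t * t * B 0 0) * (C 1 1 + t * Ah 1 1 + t * t * B 1 1)
          - (C 0 1 + t * Ah 0 1 + t * t * B 0 1) * (C 1 0 + t * Ah 1 0 + t * t * B 1 0))) := by
    funext t
    rw [schatten1]
    rw [trace_sqrt_fin_two (Matrix.posSemidef_conjTranspose_mul_self _)]
    congr 1
    have := hMt t
    rw [this, Matrix.trace_add, Matrix.trace_add, Matrix.trace_smul, Matrix.trace_smul]
    congr 1
    · simp [Matrix.trace_smul, smul_eq_mul, mul_assoc]
    · congr 1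
      rw [Matrix.det_fin_two]
      simp only [Matrix.add_apply, Matrix.smul_apply, smul_eq_mul]
      try ring
  rw [hfun]
  have hdd : Real.sqrt C.det * Real.sqrt C.det = C.det := Real.mul_self_sqrt hdet0
  set q'0 : ℝ := Ah 0 0 * C 1 1 + C 0 0 * Ah 1 1 - (Ah 0 1 * C 1 0 + C 0 1 * Ah 1 0) with hq'0def
  have hq : HasDerivAt (fun t : ℝ =>
      (C 0 0 + t * Ah 0 0 + t * t * B 0 0) * (C 1 1 + t * Ah 1 1 + t * t * B 1 1)
        - (C 0 1 + t * Ah 0 1 + t * t * B 0 1) * (C 1 0 + t * Ah 1 0 + t * t * B 1 0)) q'0 0 := by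
    have h := (((hent' (C 0 0) (Ah 0 0) (B 0 0)).mul (hent' (C 1 1) (Ah 1 1) (B 1 1))).sub
      ((hent' (C 0 1) (Ah 0 1) (B 0 1)).mul (hent' (C 1 0) (Ah 1 0) (B 1 0))))
    rw [hq'0def]
    refine h.congr_deriv ?_
    norm_num
  have hqzero : ((C 0 0 + (0:ℝ) * Ah 0 0 + 0 * 0 * B 0 0) * (C 1 1 + 0 * Ah 1 1 + 0 * 0 * B 1 1)
        - (C 0 1 + 0 * Ah 0 1 + 0 * 0 * B 0 1) * (C 1 0 + 0 * Ah 1 0 + 0 * 0 * B 1 0)) = C.det := by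
    rw [Matrix.det_fin_two]; norm_num
  have hne : ((C 0 0 + (0:ℝ) * Ah 0 0 + 0 * 0 * B 0 0) * (C 1 1 + 0 * Ah 1 1 + 0 * 0 * B 1 1)
        - (C 0 1 + 0 * Ah 0 1 + 0 * 0 * B 0 1) * (C 1 0 + 0 * Ah 1 0 + 0 * 0 * B 1 0)) ≠ 0 := by
    rw [hqzero]; exact hdetne
  have hsqrtq := hq.sqrt hne
  have inner := (hent' C.trace Ah.trace B.trace).add (hsqrtq.const_mul 2)
  have hne2 : (C.trace + (0:ℝ) * Ah.trace + 0 * 0 * B.trace)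
      + 2 * Real.sqrt ((C 0 0 + (0:ℝ) * Ah 0 0 + 0 * 0 * B 0 0) * (C 1 1 + 0 * Ah 1 1 + 0 * 0 * B 1 1)
        - (C 0 1 + 0 * Ah 0 1 + 0 * 0 * B 0 1) * (C 1 0 + 0 * Ah 1 0 + 0 * 0 * B 1 0)) ≠ 0 := by
    rw [hqzero]; norm_num; linarith [hS]
  have main := inner.sqrt hne2
  refine main.congr_deriv ?_
  symm
  simp only [Pi.add_apply]
  rw [hqzero]
  simp only [mul_zero, zero_mul, add_zero]
  rw [← hL1]
  have hkey : q'0 = C.det * ((C⁻¹ * Ah).trace) := by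
    have hCinv : C⁻¹ = (C.det)⁻¹ • !![C 1 1, -C 0 1; -C 1 0, C 0 0] := by
      rw [Matrix.inv_def, Matrix.adjugate_fin_two, Ring.inverse_eq_inv]
    rw [hq'0def, hCinv, Matrix.smul_mul, Matrix.trace_smul, smul_eq_mul, Matrix.trace_fin_two]
    simp only [Matrix.mul_apply, Fin.sum_univ_two, Matrix.cons_val', Matrix.cons_val_zero,
      Matrix.cons_val_one, Matrix.head_cons, Matrix.head_fin_const, Matrix.empty_val',
      Matrix.cons_val_fin_one, Matrix.of_apply]
    field_simp
    ring
  have h2 : (Ah.trace + 2 * (q'0 / (2 * Real.sqrt C.det)))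
      = Ah.trace + Real.sqrt C.det * (C⁻¹ * Ah).trace := by
    congr 1
    rw [hkey, ← mul_div_assoc,
      div_eq_iff (by positivity : 2 * Real.sqrt C.det ≠ 0)]
    linear_combination (-(2 * (C⁻¹ * Ah).trace)) * hdd
  rw [h2]
  ring
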